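/- Let T : H →ᵐ H be maximal monotone on a real Hilbert space H, V a closed linear subspace of H, and (x^k, u^k, ε^k) a sequence with u^k ∈ T^[ε^k](x^k), (x^k, u^k) converging weakly to (x̄, ū), and ε^k → 0. If P_{V^⊥} x^k → 0 strongly and P_V u^k → 0 strongly, then ū ∈ T(x̄), x̄ ∈ V, ū ∈ V^⊥, and ⟨x^k, u^k⟩ → ⟨x̄, ū⟩ = 0. -/

import Mathlib

open Filter InnerProductSpace

/-- The ε-enlargement of a set-valued map `T` on a real Hilbert space:
`u ∈ enl T ε x` iff `⟪x - y, u - v⟫ ≥ -ε` for all `(y, v)` in the graph of `T`. -/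
def enl {H : Type*} [NormedAddCommGroup H] [InnerProductSpace ℝ H]
    (T : H → Set H) (ε : ℝ) (x : H) : Set H :=
  {u | ∀ y v, v ∈ T y → -ε ≤ ⟪x - y, u - v⟫_ℝ}

/-- A set-valued map is monotone. -/
def MonotoneOp {H : Type*} [NormedAddCommGroup H] [InnerProductSpace ℝ H]
    (T : H → Set H) : Prop :=
  ∀ x y u v, u ∈ T x → v ∈ T y → 0 ≤ ⟪x - y, u - v⟫_ℝ

/-- A set-valued map is maximal monotone: it is monotone and its graph is not properly
contained in the graph of any monotone operator. -/
def MaxMonotoneOp {H : Type*} [NormedAddCommGroup H] [InnerProductSpace ℝ H]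
    (T : H → Set H) : Prop :=
  MonotoneOp T ∧ ∀ S : H → Set H, MonotoneOp S → (∀ x, T x ⊆ S x) → ∀ x, S x = T x
lemma norm_bdd_of_weak {H : Type*} [NormedAddCommGroup H] [InnerProductSpace ℝ H]
    [CompleteSpace H] (x : ℕ → H) (L : H → ℝ)
    (hx : ∀ w : H, Tendsto (fun k => ⟪x k, w⟫_ℝ) atTop (nhds (L w))) :
    ∃ C, ∀ k, ‖x k‖ ≤ C := by
  have h : ∀ w : H, ∃ C, ∀ k, ‖(innerSL ℝ (x k)) w‖ ≤ C := by
    intro w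
    obtain ⟨C, hC⟩ := ((hx w).norm).bddAbove_range
    exact ⟨C, fun k => hC ⟨k, rfl⟩⟩
  obtain ⟨C', hC'⟩ := banach_steinhaus h
  exact ⟨C', fun k => by simpa [innerSL_apply_norm] using hC' k⟩

lemma tendsto_inner_zero {H : Type*} [NormedAddCommGroup H] [InnerProductSpace ℝ H]
    (a b : ℕ → H) (C : ℝ) (hC : ∀ k, ‖a k‖ ≤ C)
    (hb : Tendsto b atTop (nhds 0)) :
    Tendsto (fun k => ⟪a k, b k⟫_ℝ) atTop (nhds 0) := by
  have hbn : Tendsto (fun k => C * ‖b k‖) atTop (nhds 0) := by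
    simpa using (hb.norm).const_mul C
  refine squeeze_zero_norm (fun k => ?_) hbn
  calc ‖⟪a k, b k⟫_ℝ‖ ≤ ‖a k‖ * ‖b k‖ := norm_inner_le_norm _ _
    _ ≤ C * ‖b k‖ := mul_le_mul_of_nonneg_right (hC k) (norm_nonneg _)

theorem weak_strong_graph_limit {H : Type*} [NormedAddCommGroup H]
    [InnerProductSpace ℝ H] [CompleteSpace H]
    (T : H → Set H) (hT : MaxMonotoneOp T)
    (K : Submodule ℝ H) (hK : IsClosed (K : Set H))
    [Submodule.HasOrthogonalProjection K] [Submodule.HasOrthogonalProjection Kᗮ]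
    (x u : ℕ → H) (ε : ℕ → ℝ) (xbar ubar : H)
    (hmem : ∀ k, u k ∈ enl T (ε k) (x k))
    (hxweak : ∀ w : H, Tendsto (fun k => ⟪x k, w⟫_ℝ) atTop (nhds ⟪xbar, w⟫_ℝ))
    (huweak : ∀ w : H, Tendsto (fun k => ⟪u k, w⟫_ℝ) atTop (nhds ⟪ubar, w⟫_ℝ))
    (heps : Tendsto ε atTop (nhds 0))
    (hxproj : Tendsto (fun k => ((Submodule.orthogonalProjectionOnto Kᗮ (x k) : H))) atTop (nhds 0))
    (huproj : Tendsto (fun k => ((Submodule.orthogonalProjectionOnto K (u k) : H))) atTop (nhds 0)) :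
    ubar ∈ T xbar ∧ xbar ∈ K ∧ ubar ∈ Kᗮ ∧
      Tendsto (fun k => ⟪x k, u k⟫_ℝ) atTop (nhds ⟪xbar, ubar⟫_ℝ) ∧
      ⟪xbar, ubar⟫_ℝ = 0 := by
  obtain ⟨Cx, hCx⟩ := norm_bdd_of_weak x _ hxweak
  obtain ⟨Cu, hCu⟩ := norm_bdd_of_weak u _ huweak
  set P : H → H := fun z => (Submodule.orthogonalProjectionOnto K z : H) with hP
  set Q : H → H := fun z => (Submodule.orthogonalProjectionOnto Kᗮ z : H) with hQ
  have hsum : ∀ z : H, P z + Q z = z := fun z =>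
    K.starProjection_add_starProjection_orthogonal z
  have hPmem : ∀ z : H, P z ∈ K := fun z => (Submodule.orthogonalProjectionOnto K z).2
  have hQmem : ∀ z : H, Q z ∈ Kᗮ := fun z => (Submodule.orthogonalProjectionOnto Kᗮ z).2
  have horth : ∀ p q : H, p ∈ K → q ∈ Kᗮ → ⟪p, q⟫_ℝ = 0 := fun p q hp hq =>
    (Submodule.mem_orthogonal K q).1 hq p hp
  have hQnorm : ∀ z : H, ‖Q z‖ ≤ ‖z‖ := by
    intro z
    calc ‖Q z‖ = ‖Submodule.orthogonalProjectionOnto Kᗮ z‖ := rfl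
      _ ≤ ‖Submodule.orthogonalProjectionOnto Kᗮ‖ * ‖z‖ := (Submodule.orthogonalProjectionOnto Kᗮ).le_opNorm z
      _ ≤ 1 * ‖z‖ := mul_le_mul_of_nonneg_right (Submodule.orthogonalProjectionOnto_norm_le Kᗮ) (norm_nonneg _)
      _ = ‖z‖ := one_mul _
  -- split the inner product
  have hsplit : ∀ k, ⟪x k, u k⟫_ℝ = ⟪x k, P (u k)⟫_ℝ + ⟪Q (u k), Q (x k)⟫_ℝ := by
    intro k
    have h1 : ⟪x k, u k⟫_ℝ = ⟪x k, P (u k)⟫_ℝ + ⟪x k, Q (u k)⟫_ℝ := by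
      rw [← inner_add_right, hsum]
    have h2 : ⟪x k, Q (u k)⟫_ℝ = ⟪P (x k), Q (u k)⟫_ℝ + ⟪Q (x k), Q (u k)⟫_ℝ := by
      rw [← inner_add_left, hsum]
    rw [h1, h2, horth _ _ (hPmem _) (hQmem _), zero_add, real_inner_comm (Q (x k)) (Q (u k))]
  have hinner0 : Tendsto (fun k => ⟪x k, u k⟫_ℝ) atTop (nhds 0) := by
    have t1 : Tendsto (fun k => ⟪x k, P (u k)⟫_ℝ) atTop (nhds 0) :=
      tendsto_inner_zero _ _ Cx hCx huproj
    have t2 : Tendsto (fun k => ⟪Q (u k), Q (x k)⟫_ℝ) atTop (nhds 0) :=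
      tendsto_inner_zero _ _ Cu (fun k => (hQnorm _).trans (hCu k)) hxproj
    have := t1.add t2
    simp only [add_zero] at this
    exact this.congr (fun k => (hsplit k).symm)
  -- xbar ∈ K
  have hxK : xbar ∈ K := by
    rw [← Submodule.orthogonal_orthogonal K]
    rw [Submodule.mem_orthogonal]
    intro w hw
    have key : Tendsto (fun k => ⟪x k, w⟫_ℝ) atTop (nhds 0) := by
      have : ∀ k, ⟪x k, w⟫_ℝ = ⟪Q (x k), w⟫_ℝ := by
        intro k
        conv_lhs => rw [← hsum (x k)]
        rw [inner_add_left, horth _ _ (hPmem _) hw, zero_add]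
      refine Tendsto.congr (fun k => (this k).symm) ?_
      have h := hxproj.inner (𝕜 := ℝ) (tendsto_const_nhds (x := w))
      simpa only [inner_zero_left] using h
    have := tendsto_nhds_unique (hxweak w) key
    rw [real_inner_comm] at this
    exact this
  -- ubar ∈ Kᗮ
  have huK : ubar ∈ Kᗮ := by
    rw [Submodule.mem_orthogonal]
    intro w hw
    have key : Tendsto (fun k => ⟪u k, w⟫_ℝ) atTop (nhds 0) := by
      have : ∀ k, ⟪u k, w⟫_ℝ = ⟪P (u k), w⟫_ℝ := by
        intro k
        conv_lhs => rw [← hsum (u k)]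
        have hz : ⟪Q (u k), w⟫_ℝ = 0 := by
          rw [real_inner_comm]; exact horth _ _ hw (hQmem _)
        rw [inner_add_left, hz, add_zero]
      refine Tendsto.congr (fun k => (this k).symm) ?_
      have h := huproj.inner (𝕜 := ℝ) (tendsto_const_nhds (x := w))
      simpa only [inner_zero_left] using h
    have := tendsto_nhds_unique (huweak w) key
    rw [real_inner_comm] at this
    exact this
  have hperp : ⟪xbar, ubar⟫_ℝ = 0 := horth _ _ hxK huK
  -- key inequality
  have hkey : ∀ y v, v ∈ T y → 0 ≤ ⟪xbar - y, ubar - v⟫_ℝ := by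
    intro y v hv
    have hexp : ∀ k, ⟪x k - y, u k - v⟫_ℝ =
        ⟪x k, u k⟫_ℝ - ⟪x k, v⟫_ℝ - ⟪u k, y⟫_ℝ + ⟪y, v⟫_ℝ := by
      intro k
      rw [inner_sub_left, inner_sub_right, inner_sub_right, real_inner_comm y (u k)]
      ring
    have hlim : Tendsto (fun k => ⟪x k - y, u k - v⟫_ℝ) atTop
        (nhds (⟪xbar - y, ubar - v⟫_ℝ)) := by
      have h1 := ((hinner0.sub (hxweak v)).sub (huweak y)).add
        (tendsto_const_nhds (x := ⟪y, v⟫_ℝ))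
      have heq : ⟪xbar - y, ubar - v⟫_ℝ =
          0 - ⟪xbar, v⟫_ℝ - ⟪ubar, y⟫_ℝ + ⟪y, v⟫_ℝ := by
        rw [inner_sub_left, inner_sub_right, inner_sub_right, real_inner_comm y ubar, hperp]
        ring
      rw [heq]
      exact (h1.congr (fun k => (hexp k).symm))
    have hneg : Tendsto (fun k => -ε k) atTop (nhds 0) := by
      simpa using heps.neg
    exact le_of_tendsto_of_tendsto' hneg hlim (fun k => hmem k y v hv)
  -- maximality
  have hub : ubar ∈ T xbar := by
    set S : H → Set H := fun z => T z ∪ {w | z = xbar ∧ w = ubar} with hS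
    have hmono : MonotoneOp S := by
      intro a b p q hp hq
      rcases hp with hp | hp <;> rcases hq with hq | hq
      · exact hT.1 a b p q hp hq
      · rw [hq.1, hq.2]
        calc (0:ℝ) ≤ ⟪xbar - a, ubar - p⟫_ℝ := hkey a p hp
          _ = ⟪a - xbar, p - ubar⟫_ℝ := by
              rw [← inner_neg_neg (𝕜 := ℝ), neg_sub, neg_sub]
      · rw [hp.1, hp.2]
        exact hkey b q hq
      · rw [hp.1, hp.2, hq.1, hq.2]
        simp
    have hsub : ∀ z, T z ⊆ S z := fun z => Set.subset_union_left
    have := hT.2 S hmono hsub xbar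
    rw [← this]
    exact Or.inr ⟨rfl, rfl⟩
  refine ⟨hub, hxK, huK, ?_, hperp⟩
  rw [hperp]
  exact hinner0
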